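/- With the explicit normal-equation solution w_α[m; d], the data residual satisfies (F[m]w_α[m; d] - d)(t) = -(4πr·α·a(t - mr))² (1 + (4πr·α·a(t - mr))²)^{-1} d(t), and hence the mean-square misfit is e[m, w_α[m;d]; d] = (2‖d‖²)^{-1} ∫_{t_min}^{t_max} (4πr·α·a(t - mr))^4 (1 + (4πr·α·a(t - mr))²)^{-2} d(t)² dt. -/

import Mathlib

open MeasureTheory Real Set

/-- With the explicit normal-equation solution `w_α[m;d]`, the
data residual satisfies
`(F[m]w_α - d)(t) = -(4πrα a(t-mr))² (1+(4πrα a(t-mr))²)⁻¹ d(t)` on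
`[t_min, t_max]`, and hence the mean-square misfit `e[m, w_α; d]` equals
`(2‖d‖²)⁻¹ ∫ (4πrα a(t-mr))⁴ (1+(4πrα a(t-mr))²)⁻² d(t)² dt`. -/
theorem stmt_8 (r mmin mmax lammax tmin tmax C α : ℝ) (a d : ℝ → ℝ)
    (hr : 0 < r) (hmmin : 0 < mmin) (hmm : mmin ≤ mmax) (hlammax : 0 < lammax)
    (ht : tmin < tmax) (hC : 0 < C) (hα : 0 < α)
    (habd : ∃ K, ∀ t, |a t| ≤ K)
    (ha0 : ∀ t, 0 ≤ a t) (haC : ∀ t, lammax ≤ |t| → C ≤ a t)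
    (hcont : Icc (mmin * r - lammax) (mmax * r + lammax) ⊆ Icc tmin tmax)
    (m : ℝ) (hm : m ∈ Ioo mmin mmax)
    (hd : MemLp d 2 ((volume : Measure ℝ).restrict (Icc tmin tmax)))
    (hdnz : 0 < ∫ t in Icc tmin tmax, (d t) ^ 2)
    (walpha : ℝ → ℝ)
    (hw : walpha = (Icc (tmin - m * r) (tmax - m * r)).indicator
        (fun t => (1 / (4 * π * r) ^ 2 + α ^ 2 * (a t) ^ 2)⁻¹
          * (d (t + m * r) / (4 * π * r)))) :
    (∀ t ∈ Icc tmin tmax,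
      walpha (t - m * r) / (4 * π * r) - d t
        = -((4 * π * r * α * a (t - m * r)) ^ 2
            * (1 + (4 * π * r * α * a (t - m * r)) ^ 2)⁻¹ * d t)) ∧
    (∫ t in Icc tmin tmax, (walpha (t - m * r) / (4 * π * r) - d t) ^ 2)
        / (2 * ∫ t in Icc tmin tmax, (d t) ^ 2)
      = (2 * ∫ t in Icc tmin tmax, (d t) ^ 2)⁻¹ *
        ∫ t in Icc tmin tmax, (4 * π * r * α * a (t - m * r)) ^ 4
          * ((1 + (4 * π * r * α * a (t - m * r)) ^ 2) ^ 2)⁻¹ * (d t) ^ 2 := by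
  have hc : (0:ℝ) < 4 * π * r := by positivity
  have hc' : (4 * π * r : ℝ) ≠ 0 := ne_of_gt hc
  have key : ∀ t ∈ Icc tmin tmax,
      walpha (t - m * r) / (4 * π * r) - d t
        = -((4 * π * r * α * a (t - m * r)) ^ 2
            * (1 + (4 * π * r * α * a (t - m * r)) ^ 2)⁻¹ * d t) := by
    intro t htm
    have hmem : t - m * r ∈ Icc (tmin - m * r) (tmax - m * r) := by
      constructor <;> simp [sub_le_sub_right, htm.1, htm.2]
    rw [hw, indicator_of_mem hmem]

    rw [sub_add_cancel]
    set A := a (t - m * r) with hA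
    have h1 : (1 / (4 * π * r) ^ 2 + α ^ 2 * A ^ 2) ≠ 0 := by positivity
    have h2 : (1 + (4 * π * r * α * A) ^ 2) ≠ 0 := by positivity
    field_simp
    ring
  refine ⟨key, ?_⟩
  have hint : (∫ t in Icc tmin tmax, (walpha (t - m * r) / (4 * π * r) - d t) ^ 2)
      = ∫ t in Icc tmin tmax, (4 * π * r * α * a (t - m * r)) ^ 4
          * ((1 + (4 * π * r * α * a (t - m * r)) ^ 2) ^ 2)⁻¹ * (d t) ^ 2 := by
    apply setIntegral_congr_fun measurableSet_Icc
    intro t htm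
    simp only []
    rw [key t htm]
    have h2 : (1 + (4 * π * r * α * a (t - m * r)) ^ 2) ≠ 0 := by positivity
    field_simp
  rw [hint, div_eq_inv_mul]
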